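/- Let R = ℚ[y,z] and take a₁ = −3(y+z), b₁ = 0, a₂ = 3(y² + yz + z²), b₂ = 0 in the rank-4 folded Koszul complex. Then the odd homology ker d¹/im d⁰ vanishes, and the even homology ker d⁰/im d¹ is generated as an R-module by the class of |11⟩ and is isomorphic as an R-module to ℚ[y,z]/(y + z, y² + yz + z²), a quotient which is in turn isomorphic as a ℚ-algebra to ℚ[y]/(y²). -/

import Mathlib

set_option synthInstance.maxHeartbeats 1000000
set_option maxHeartbeats 1000000

/-- The differential `d⁰` of the rank-4 folded Koszul complex (tensor product of the
two-periodic factorizations `(a₁,b₁)` and `(a₂,b₂)`), from the even part (free on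
`|00⟩, |11⟩`, an element `(x, y)` standing for `x|00⟩ + y|11⟩`) to the odd part
(free on `|01⟩, |10⟩`, an element `(u, v)` standing for `u|01⟩ + v|10⟩`):
`d⁰(|00⟩) = a₁|10⟩ + a₂|01⟩`, `d⁰(|11⟩) = b₂|10⟩ − b₁|01⟩`. -/
noncomputable def rank4d0 {R : Type*} [CommRing R] (a₁ b₁ a₂ b₂ : R) :
    (R × R) →ₗ[R] (R × R) where
  toFun p := (a₂ * p.1 - b₁ * p.2, a₁ * p.1 + b₂ * p.2)
  map_add' p q := by
    ext <;> simp <;> ring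
  map_smul' r p := by
    ext <;> simp <;> ring

/-- The differential `d¹` of the rank-4 folded Koszul complex, from the odd part to the
even part: `d¹(|01⟩) = b₂|00⟩ − a₁|11⟩`, `d¹(|10⟩) = b₁|00⟩ + a₂|11⟩`. -/
noncomputable def rank4d1 {R : Type*} [CommRing R] (a₁ b₁ a₂ b₂ : R) :
    (R × R) →ₗ[R] (R × R) where
  toFun p := (b₂ * p.1 + b₁ * p.2, -(a₁ * p.1) + a₂ * p.2)
  map_add' p q := by
    ext <;> simp <;> ring
  map_smul' r p := by
    ext <;> simp <;> ring

/-- The even homology `ker d⁰ / im d¹` of the rank-4 folded Koszul complex. -/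
noncomputable abbrev rank4EvenHomology {R : Type*} [CommRing R] (a₁ b₁ a₂ b₂ : R) :=
  LinearMap.ker (rank4d0 a₁ b₁ a₂ b₂) ⧸
    ((LinearMap.range (rank4d1 a₁ b₁ a₂ b₂)).comap
      (LinearMap.ker (rank4d0 a₁ b₁ a₂ b₂)).subtype)

/-- The odd homology `ker d¹ / im d⁰` of the rank-4 folded Koszul complex. -/
noncomputable abbrev rank4OddHomology {R : Type*} [CommRing R] (a₁ b₁ a₂ b₂ : R) :=
  LinearMap.ker (rank4d1 a₁ b₁ a₂ b₂) ⧸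
    ((LinearMap.range (rank4d0 a₁ b₁ a₂ b₂)).comap
      (LinearMap.ker (rank4d1 a₁ b₁ a₂ b₂)).subtype)

section KoszulAux

open MvPolynomial

@[simp] lemma rank4d0_apply {R : Type*} [CommRing R] (a₁ b₁ a₂ b₂ : R) (p : R × R) :
    rank4d0 a₁ b₁ a₂ b₂ p = (a₂ * p.1 - b₁ * p.2, a₁ * p.1 + b₂ * p.2) := rfl

@[simp] lemma rank4d1_apply {R : Type*} [CommRing R] (a₁ b₁ a₂ b₂ : R) (p : R × R) :
    rank4d1 a₁ b₁ a₂ b₂ p = (b₂ * p.1 + b₁ * p.2, -(a₁ * p.1) + a₂ * p.2) := rfl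

local notation "R2" => MvPolynomial (Fin 2) ℚ

lemma prime_yz : Prime (X 0 + X 1 : R2) := by
  rw [← MulEquiv.prime_iff (MvPolynomial.finSuccEquiv ℚ 1).toMulEquiv]
  show Prime ((MvPolynomial.finSuccEquiv ℚ 1) (X 0 + X 1))
  have : (MvPolynomial.finSuccEquiv ℚ 1) (X 0 + X 1 : R2)
      = Polynomial.X - Polynomial.C (-(X 0)) := by
    rw [map_add, finSuccEquiv_X_zero,
      show ((1 : Fin 2)) = Fin.succ 0 by rfl, finSuccEquiv_X_succ]
    rw [map_neg, sub_neg_eq_add]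
  rw [this]
  exact Polynomial.prime_X_sub_C _

lemma not_dvd_yz : ¬ (X 0 + X 1 : R2) ∣ (X 0 ^ 2 + X 0 * X 1 + X 1 ^ 2) := by
  rintro ⟨c, hc⟩
  have := congrArg (eval (fun i : Fin 2 => if i = 0 then (1 : ℚ) else -1)) hc
  simp at this

lemma q_ne_zero : (X 0 ^ 2 + X 0 * X 1 + X 1 ^ 2 : R2) ≠ 0 := by
  intro h
  have := congrArg (eval (fun _ : Fin 2 => (1 : ℚ))) h
  simp at this
  norm_num at this

lemma three_C_third : (3 : R2) * C (1/3 : ℚ) = 1 := by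
  have : (3 : R2) = C (3 : ℚ) := by simp [map_ofNat]
  rw [this, ← C_mul]
  norm_num

lemma key_div (u v : R2)
    (h : (X 0 + X 1) * u + (X 0 ^ 2 + X 0 * X 1 + X 1 ^ 2) * v = 0) :
    ∃ t : R2, u = (X 0 ^ 2 + X 0 * X 1 + X 1 ^ 2) * t ∧ v = -((X 0 + X 1) * t) := by
  set p : R2 := X 0 + X 1
  set q : R2 := X 0 ^ 2 + X 0 * X 1 + X 1 ^ 2
  have hpv : p ∣ q * v := ⟨-u, by linear_combination h⟩
  have hv : p ∣ v := (prime_yz.dvd_or_dvd hpv).resolve_left not_dvd_yz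
  obtain ⟨s, hs⟩ := hv
  refine ⟨-s, ?_, ?_⟩
  · have hp0 : p ≠ 0 := prime_yz.ne_zero
    have : p * u = p * (q * -s) := by rw [hs] at h; linear_combination h
    exact mul_left_cancel₀ hp0 this
  · rw [hs]; ring


lemma three_ne : (3 : R2) ≠ 0 := by norm_num

lemma three_q_ne : (3 * (X 0 ^ 2 + X 0 * X 1 + X 1 ^ 2) : R2) ≠ 0 :=
  mul_ne_zero three_ne q_ne_zero

end KoszulAux

open MvPolynomial

/-- For `R = ℚ[y,z]` and the rank-4 folded Koszul complex with
`a₁ = −3(y+z)`, `b₁ = 0`, `a₂ = 3(y² + yz + z²)`, `b₂ = 0`: the odd homology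
`ker d¹/im d⁰` vanishes, and the even homology `ker d⁰/im d¹` is generated as an
`R`-module by the class of `|11⟩` and is isomorphic as an `R`-module to
`ℚ[y,z]/(y + z, y² + yz + z²)`, a quotient which is in turn isomorphic as a
`ℚ`-algebra to `ℚ[y]/(y²)`. -/
theorem homology_of_G1 (y z : MvPolynomial (Fin 2) ℚ)
    (hy : y = MvPolynomial.X 0) (hz : z = MvPolynomial.X 1) :
    Subsingleton (rank4OddHomology (-3 * (y + z)) 0 (3 * (y ^ 2 + y * z + z ^ 2)) 0) ∧
    (∃ h : ((0, 1) : MvPolynomial (Fin 2) ℚ × MvPolynomial (Fin 2) ℚ) ∈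
        LinearMap.ker (rank4d0 (-3 * (y + z)) 0 (3 * (y ^ 2 + y * z + z ^ 2)) 0),
      Submodule.span (MvPolynomial (Fin 2) ℚ)
          {(Submodule.Quotient.mk ⟨_, h⟩ :
            rank4EvenHomology (-3 * (y + z)) 0 (3 * (y ^ 2 + y * z + z ^ 2)) 0)} = ⊤ ∧
      Nonempty (rank4EvenHomology (-3 * (y + z)) 0 (3 * (y ^ 2 + y * z + z ^ 2)) 0
          ≃ₗ[MvPolynomial (Fin 2) ℚ]
        (MvPolynomial (Fin 2) ℚ ⧸ Ideal.span {y + z, y ^ 2 + y * z + z ^ 2}))) ∧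
    Nonempty ((MvPolynomial (Fin 2) ℚ ⧸ Ideal.span {y + z, y ^ 2 + y * z + z ^ 2})
        ≃ₐ[ℚ] (Polynomial ℚ ⧸ Ideal.span {(Polynomial.X : Polynomial ℚ) ^ 2})) := by
  subst hy hz
  set p : MvPolynomial (Fin 2) ℚ := X 0 + X 1 with hp
  set q : MvPolynomial (Fin 2) ℚ := X 0 ^ 2 + X 0 * X 1 + X 1 ^ 2 with hq
  have hfst : ∀ x : LinearMap.ker (rank4d0 (-3 * p) 0 (3 * q) 0),
      (x : MvPolynomial (Fin 2) ℚ × MvPolynomial (Fin 2) ℚ).1 = 0 := by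
    rintro ⟨⟨u, v⟩, hx⟩
    rw [LinearMap.mem_ker] at hx
    simp only [rank4d0_apply, Prod.ext_iff, Prod.fst_zero, Prod.snd_zero] at hx
    have h1 : 3 * q * u = 0 := by linear_combination hx.1
    exact (mul_eq_zero.1 h1).resolve_left three_q_ne
  refine ⟨?_, ?_, ?_⟩
  · -- odd homology vanishes
    rw [Submodule.Quotient.subsingleton_iff, Submodule.eq_top_iff']
    rintro ⟨⟨u, v⟩, hk⟩
    rw [LinearMap.mem_ker] at hk
    simp only [rank4d1_apply, Prod.ext_iff, Prod.fst_zero, Prod.snd_zero] at hk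
    have h0 : (3 : MvPolynomial (Fin 2) ℚ) * (p * u + q * v) = 3 * 0 := by
      linear_combination hk.2
    have h1 : p * u + q * v = 0 := mul_left_cancel₀ three_ne h0
    obtain ⟨t, ht1, ht2⟩ := key_div u v h1
    simp only [Submodule.mem_comap, Submodule.coe_subtype, LinearMap.mem_range]
    refine ⟨(C (1/3 : ℚ) * t, 0), ?_⟩
    rw [rank4d0_apply, Prod.ext_iff]
    constructor
    · show 3 * q * (C (1/3 : ℚ) * t) - 0 * 0 = u
      rw [ht1]; linear_combination q * t * three_C_third
    · show -3 * p * (C (1/3 : ℚ) * t) + 0 * 0 = v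
      rw [ht2]; linear_combination (-(p * t)) * three_C_third
  · -- even homology
    have hmem : ((0, 1) : MvPolynomial (Fin 2) ℚ × MvPolynomial (Fin 2) ℚ) ∈
        LinearMap.ker (rank4d0 (-3 * p) 0 (3 * q) 0) := by
      rw [LinearMap.mem_ker, rank4d0_apply, Prod.ext_iff]
      constructor <;> simp
    refine ⟨hmem, ?_, ?_⟩
    · -- span of |11⟩ is everything
      have hgen : ∀ x : LinearMap.ker (rank4d0 (-3 * p) 0 (3 * q) 0),
          x = (x : MvPolynomial (Fin 2) ℚ × MvPolynomial (Fin 2) ℚ).2 • (⟨(0, 1), hmem⟩ :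
            LinearMap.ker (rank4d0 (-3 * p) 0 (3 * q) 0)) := by
        intro x
        apply Subtype.ext
        rw [Submodule.coe_smul, Prod.ext_iff]
        constructor
        · rw [hfst x]; simp
        · simp
      have hstop : Submodule.span (MvPolynomial (Fin 2) ℚ)
          {(⟨(0, 1), hmem⟩ : LinearMap.ker (rank4d0 (-3 * p) 0 (3 * q) 0))} = ⊤ := by
        rw [Submodule.eq_top_iff']
        intro x
        rw [hgen x]
        exact Submodule.smul_mem _ _ (Submodule.mem_span_singleton_self _)
      rw [← Submodule.mkQ_apply, ← Set.image_singleton, ← Submodule.map_span, hstop,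
        Submodule.map_top, Submodule.range_mkQ]
    · -- isomorphism with the quotient ring
      set K := LinearMap.ker (rank4d0 (-3 * p) 0 (3 * q) 0) with hK
      set N := (LinearMap.range (rank4d1 (-3 * p) 0 (3 * q) 0)).comap K.subtype with hN
      let f0 : MvPolynomial (Fin 2) ℚ →ₗ[MvPolynomial (Fin 2) ℚ]
          MvPolynomial (Fin 2) ℚ × MvPolynomial (Fin 2) ℚ := LinearMap.prod 0 LinearMap.id
      have hf0 : ∀ t, f0 t ∈ K := by
        intro t
        rw [hK, LinearMap.mem_ker, rank4d0_apply, Prod.ext_iff]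
        constructor <;> simp [f0]
      let f : MvPolynomial (Fin 2) ℚ →ₗ[MvPolynomial (Fin 2) ℚ] K :=
        f0.codRestrict _ hf0
      have hfval : ∀ t, ((f t : K) : MvPolynomial (Fin 2) ℚ × MvPolynomial (Fin 2) ℚ) = (0, t) := fun t => rfl
      have hbij : Function.Bijective f := by
        constructor
        · intro a b hab
          have h := congrArg (fun x : K => (x : MvPolynomial (Fin 2) ℚ × MvPolynomial (Fin 2) ℚ).2) hab
          simpa [hfval] using h
        · rintro ⟨⟨u, v⟩, hx⟩
          refine ⟨v, Subtype.ext ?_⟩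
          rw [hfval, Prod.ext_iff]
          exact ⟨(hfst ⟨(u, v), hx⟩).symm, rfl⟩
      let e := LinearEquiv.ofBijective f hbij
      have heval : ∀ t, ((e t : K) : MvPolynomial (Fin 2) ℚ × MvPolynomial (Fin 2) ℚ) = (0, t) := fun t => rfl
      refine ⟨(Submodule.Quotient.equiv (Ideal.span {p, q}) N e ?_).symm⟩
      apply le_antisymm
      · rintro x hx
        simp only [Submodule.mem_map] at hx
        obtain ⟨t, ht, rfl⟩ := hx
        rw [Ideal.mem_span_pair] at ht
        obtain ⟨a, b, hab⟩ := ht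
        rw [hN]
        simp only [Submodule.mem_comap, LinearMap.mem_range]
        refine ⟨(C (1/3 : ℚ) * a, C (1/3 : ℚ) * b), ?_⟩
        refine Eq.trans ?_ (heval t).symm
        rw [rank4d1_apply, Prod.ext_iff]
        constructor
        · simp
        · show -(-3 * p * (C (1/3 : ℚ) * a)) + 3 * q * (C (1/3 : ℚ) * b) = t
          rw [← hab]; linear_combination (p * a + q * b) * three_C_third
      · rintro ⟨⟨x0, x1⟩, hx⟩ hxN
        rw [hN] at hxN
        simp only [Submodule.mem_comap, LinearMap.mem_range] at hxN
        obtain ⟨⟨u, v⟩, huv⟩ := hxN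
        rw [rank4d1_apply] at huv
        have h2 : -(-3 * p * u) + 3 * q * v = x1 := congrArg Prod.snd huv
        refine Submodule.mem_map.2 ⟨x1, ?_, ?_⟩
        · rw [Ideal.mem_span_pair]
          exact ⟨3 * u, 3 * v, by linear_combination h2⟩
        · apply Subtype.ext
          show ((e x1 : K) : MvPolynomial (Fin 2) ℚ × MvPolynomial (Fin 2) ℚ) = (x0, x1)
          rw [heval, Prod.ext_iff]
          exact ⟨(hfst ⟨(x0, x1), hx⟩).symm, rfl⟩
  · -- algebra isomorphism with ℚ[X]/(X²)
    set J : Ideal (Polynomial ℚ) := Ideal.span {(Polynomial.X : Polynomial ℚ) ^ 2} with hJ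
    set I : Ideal (MvPolynomial (Fin 2) ℚ) := Ideal.span {p, q} with hI
    set Xq : Polynomial ℚ ⧸ J := Ideal.Quotient.mk J Polynomial.X with hXq
    have hXq2 : Xq ^ 2 = 0 := by
      rw [hXq, ← map_pow, Ideal.Quotient.eq_zero_iff_mem, hJ]
      exact Ideal.subset_span rfl
    let f : MvPolynomial (Fin 2) ℚ →ₐ[ℚ] Polynomial ℚ ⧸ J :=
      aeval (fun i : Fin 2 => if i = 0 then Xq else -Xq)
    have hfp : f p = 0 := by simp [f, hp]
    have hfq : f q = 0 := by
      have : f q = Xq ^ 2 := by simp [f, hq]; ring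
      rw [this, hXq2]
    have hfI : ∀ a ∈ I, f a = 0 := by
      intro a ha
      have hsub : I ≤ RingHom.ker (f : MvPolynomial (Fin 2) ℚ →+* Polynomial ℚ ⧸ J) := by
        rw [hI, Ideal.span_le]
        rintro r hr
        simp only [Set.mem_insert_iff, Set.mem_singleton_iff] at hr
        rcases hr with rfl | rfl
        · simpa [RingHom.mem_ker] using hfp
        · simpa [RingHom.mem_ker] using hfq
      exact hsub ha
    let F : (MvPolynomial (Fin 2) ℚ ⧸ I) →ₐ[ℚ] Polynomial ℚ ⧸ J :=
      Ideal.Quotient.liftₐ I f hfI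
    let g : Polynomial ℚ →ₐ[ℚ] MvPolynomial (Fin 2) ℚ ⧸ I :=
      Polynomial.aeval (Ideal.Quotient.mk I (X 0))
    have hgJ : ∀ a ∈ J, g a = 0 := by
      intro a ha
      have hsub : J ≤ RingHom.ker (g : Polynomial ℚ →+* MvPolynomial (Fin 2) ℚ ⧸ I) := by
        rw [hJ, Ideal.span_le]
        rintro r hr
        simp only [Set.mem_singleton_iff] at hr
        subst hr
        rw [SetLike.mem_coe, RingHom.mem_ker]
        show g ((Polynomial.X : Polynomial ℚ) ^ 2) = 0
        have : g ((Polynomial.X : Polynomial ℚ) ^ 2) =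
            Ideal.Quotient.mk I (X 0 ^ 2) := by simp [g]
        rw [this, Ideal.Quotient.eq_zero_iff_mem, hI]
        rw [Ideal.mem_span_pair]
        exact ⟨-X 1, 1, by rw [hp, hq]; ring⟩
      exact hsub ha
    let G : (Polynomial ℚ ⧸ J) →ₐ[ℚ] MvPolynomial (Fin 2) ℚ ⧸ I :=
      Ideal.Quotient.liftₐ J g hgJ
    refine ⟨AlgEquiv.ofAlgHom F G ?_ ?_⟩
    · apply Ideal.Quotient.algHom_ext
      apply Polynomial.algHom_ext
      simp [F, G, f, g, Xq]
      erw [Ideal.Quotient.lift_mk]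
      simp
      erw [Ideal.Quotient.lift_mk]
      simp
    · apply Ideal.Quotient.algHom_ext
      apply MvPolynomial.algHom_ext
      intro i
      fin_cases i
      · simp [F, G, f, g, Xq]
        erw [Ideal.Quotient.lift_mk]
        simp
        erw [Ideal.Quotient.lift_mk]
        simp
      · simp only [AlgHom.coe_comp, Function.comp_apply, Ideal.Quotient.mkₐ_eq_mk,
          AlgHom.coe_id, id_eq]
        show G (F (Ideal.Quotient.mk I (X 1))) = Ideal.Quotient.mk I (X 1)
        have h1 : F (Ideal.Quotient.mk I (X 1)) = -Xq := by simp [F, f]; erw [Ideal.Quotient.lift_mk]; simp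
        rw [h1]
        have h2 : G (-Xq) = Ideal.Quotient.mk I (-(X 0)) := by simp [G, g, Xq]; erw [Ideal.Quotient.lift_mk]; simp
        rw [h2, Ideal.Quotient.mk_eq_mk_iff_sub_mem]
        have : (-(X 0) - X 1 : MvPolynomial (Fin 2) ℚ) = -p := by rw [hp]; ring
        rw [this, hI]
        exact neg_mem (Ideal.subset_span (by simp))
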